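/- For every n ≥ 1, let A be the real matrix with rows indexed by s ∈ {0,1}^n and columns by t ∈ {1,…,n} given by A_{s,t} = (−1)^{s_t}/(n·2^n), and let u := 1/(2√n·2^n) and v := 1/(2n√n). Then the symmetric block matrix [[u·I_{2^n}, −A/2], [−Aᵀ/2, v·I_n]] (indexed by the disjoint union {0,1}^n ⊔ {1,…,n}) is positive semidefinite. -/

import Mathlib

open Matrix BigOperators Finset

private def eps {n : ℕ} (s : Fin n → ZMod 2) (t : Fin n) : ℝ :=
  if s t = 0 then 1 else -1

private lemma zmod2_cases (a : ZMod 2) : a = 0 ∨ a = 1 := by revert a; decide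

private lemma eps_sq {n : ℕ} (s : Fin n → ZMod 2) (t : Fin n) : eps s t * eps s t = 1 := by
  unfold eps; split <;> norm_num

private lemma sum_eps_ne {n : ℕ} (t t' : Fin n) (h : t ≠ t') :
    ∑ s : Fin n → ZMod 2, eps s t * eps s t' = 0 := by
  have hinv : Function.Involutive (fun s : Fin n → ZMod 2 => Function.update s t (s t + 1)) := by
    intro s
    simp only [Function.update_self]
    funext i
    by_cases hi : i = t
    · subst hi
      rw [Function.update_self]
      rcases zmod2_cases (s i) with h0 | h0 <;> rw [h0] <;> decide
    · rw [Function.update_of_ne hi, Function.update_of_ne hi]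
  have hflip : ∀ s : Fin n → ZMod 2,
      eps (Function.update s t (s t + 1)) t * eps (Function.update s t (s t + 1)) t'
        = -(eps s t * eps s t') := by
    intro s
    have h2 : eps (Function.update s t (s t + 1)) t' = eps s t' := by
      unfold eps; rw [Function.update_of_ne (Ne.symm h)]
    have h1 : eps (Function.update s t (s t + 1)) t = -eps s t := by
      unfold eps
      rcases zmod2_cases (s t) with h0 | h1
      · rw [Function.update_self, h0, show ((0:ZMod 2) + 1) = 1 from rfl]
        norm_num [show ((1:ZMod 2) ≠ 0) from by decide]
      · rw [Function.update_self, h1, show ((1:ZMod 2) + 1) = 0 from rfl]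
        norm_num [show ((1:ZMod 2) ≠ 0) from by decide]
    rw [h1, h2]; ring
  have hs : ∑ s : Fin n → ZMod 2,
        (fun s => eps s t * eps s t') (Function.update s t (s t + 1))
      = ∑ s : Fin n → ZMod 2, eps s t * eps s t' :=
    Fintype.sum_equiv (hinv.toPerm _) _ _ (fun s => rfl)
  simp only at hs
  rw [Finset.sum_congr rfl (fun s _ => hflip s)] at hs
  rw [Finset.sum_neg_distrib] at hs
  linarith

private lemma sum_eps {n : ℕ} (t t' : Fin n) :
    ∑ s : Fin n → ZMod 2, eps s t * eps s t' = if t = t' then (2 : ℝ) ^ n else 0 := by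
  by_cases h : t = t'
  · subst h
    simp only [if_pos rfl]
    rw [Finset.sum_congr rfl (fun s _ => eps_sq s t)]
    simp [Finset.card_univ]
  · rw [if_neg h, sum_eps_ne t t' h]

private lemma sum_g_sq {n : ℕ} (w : Fin n → ℝ) :
    ∑ s : Fin n → ZMod 2, (∑ t, eps s t * w t) * (∑ t, eps s t * w t)
      = 2 ^ n * ∑ t, w t * w t := by
  have expand : ∀ s : Fin n → ZMod 2, (∑ t, eps s t * w t) * (∑ t, eps s t * w t)
      = ∑ t, ∑ t', (eps s t * eps s t') * (w t * w t') := by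
    intro s
    rw [Finset.sum_mul_sum]
    exact Finset.sum_congr rfl fun t _ => Finset.sum_congr rfl fun t' _ => by ring
  rw [Finset.sum_congr rfl (fun s _ => expand s)]
  rw [Finset.sum_comm]
  have step : ∀ t : Fin n, ∑ s : Fin n → ZMod 2, ∑ t', (eps s t * eps s t') * (w t * w t')
      = 2 ^ n * (w t * w t) := by
    intro t
    rw [Finset.sum_comm]
    have : ∀ t' : Fin n, ∑ s : Fin n → ZMod 2, (eps s t * eps s t') * (w t * w t')
        = (if t = t' then (2:ℝ)^n else 0) * (w t * w t') := by
      intro t'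
      rw [← Finset.sum_mul, sum_eps]
    rw [Finset.sum_congr rfl (fun t' _ => this t')]
    simp [Finset.sum_ite_eq]
  rw [Finset.sum_congr rfl (fun t _ => step t), ← Finset.mul_sum]

/-- The dual-feasible solution of the SDP for the INDEX game: with
`A_{s,t} = (−1)^{s_t}/(n·2^n)`, `u = 1/(2√n·2^n)` and `v = 1/(2n√n)`, the block matrix
`[[u·I, −A/2], [−Aᵀ/2, v·I]]` is positive semidefinite. -/
theorem index_game_dual_feasible (n : ℕ) (hn : 1 ≤ n) :
    (Matrix.fromBlocks
      ((1 / (2 * Real.sqrt n * 2 ^ n)) •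
        (1 : Matrix (Fin n → ZMod 2) (Fin n → ZMod 2) ℝ))
      ((-(1 / 2) : ℝ) • (fun (s : Fin n → ZMod 2) (t : Fin n) =>
        (if s t = 0 then (1 : ℝ) else -1) / (n * 2 ^ n)))
      ((-(1 / 2) : ℝ) • (fun (s : Fin n → ZMod 2) (t : Fin n) =>
        (if s t = 0 then (1 : ℝ) else -1) / (n * 2 ^ n))ᵀ)
      ((1 / (2 * n * Real.sqrt n)) • (1 : Matrix (Fin n) (Fin n) ℝ))).PosSemidef := by
  set N : ℝ := 2 ^ n with hN
  set r : ℝ := Real.sqrt n with hr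
  have hnpos : (0:ℝ) < n := by exact_mod_cast hn
  have hNpos : (0:ℝ) < N := by positivity
  have hrpos : (0:ℝ) < r := Real.sqrt_pos.mpr hnpos
  have hr2 : r * r = n := Real.mul_self_sqrt (le_of_lt hnpos)
  set u : ℝ := 1 / (2 * r * N) with hu
  set vv : ℝ := 1 / (2 * n * r) with hvv
  have hupos : 0 < u := by positivity
  have hvvpos : 0 < vv := by positivity
  set a : ℝ := Real.sqrt u with ha
  set c : ℝ := Real.sqrt (vv / N) with hc
  have ha2 : a * a = u := Real.mul_self_sqrt (le_of_lt hupos)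
  have hc2 : c * c = vv / N := Real.mul_self_sqrt (by positivity)
  have hac : a * c = 1 / (2 * n * N) := by
    rw [ha, hc, ← Real.sqrt_mul (le_of_lt hupos)]
    have key2 : u * (vv / N) = 1 / (4 * (r * r) * n * N ^ 2) := by
      rw [hu, hvv]; ring
    rw [key2, hr2, show 1 / (4 * (n:ℝ) * n * N ^ 2) = (1 / (2 * n * N)) ^ 2 from by ring,
      Real.sqrt_sq (by positivity)]
  rw [Matrix.posSemidef_iff_dotProduct_mulVec]
  constructor
  · show _ᴴ = _
    ext i j
    rcases i with i | i <;> rcases j with j | j <;>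
      simp [Matrix.conjTranspose_apply, Matrix.one_apply, eq_comm, Matrix.fromBlocks, Matrix.transpose]
  · intro x
    refine le_trans (Finset.sum_nonneg fun s (_ : s ∈ Finset.univ) =>
      sq_nonneg (a * x (Sum.inl s) - c * ∑ t, eps s t * x (Sum.inr t))) (le_of_eq ?_)
    rw [star_trivial]
    erw [Matrix.fromBlocks_mulVec]
    simp only [Matrix.smul_mulVec, Matrix.one_mulVec, dotProduct,
      Fintype.sum_sum_type, Sum.elim_inl, Sum.elim_inr, Pi.add_apply, Pi.smul_apply,
      smul_eq_mul, Matrix.mulVec, Matrix.transpose_apply]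
    simp only [Function.comp_apply]
    have crossA : ∀ s : Fin n → ZMod 2,
        (∑ t : Fin n, -(1/2) * ((if s t = 0 then (1:ℝ) else -1) / (↑n * N)) * x (Sum.inr t))
          = -(1/(2*↑n*N)) * ∑ t, eps s t * x (Sum.inr t) := by
      intro s
      rw [Finset.mul_sum]
      refine Finset.sum_congr rfl fun t _ => ?_
      unfold eps; ring
    have crossB : ∀ t : Fin n,
        -(1/2) * ∑ s : Fin n → ZMod 2,
            (if s t = 0 then (1:ℝ) else -1) / (↑n * N) * x (Sum.inl s)
          = -(1/(2*↑n*N)) * ∑ s : Fin n → ZMod 2, eps s t * x (Sum.inl s) := by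
      intro t
      rw [Finset.mul_sum, Finset.mul_sum]
      refine Finset.sum_congr rfl fun s _ => ?_
      unfold eps; ring
    have swap : ∑ t : Fin n, x (Sum.inr t) * ∑ s : Fin n → ZMod 2, eps s t * x (Sum.inl s)
        = ∑ s : Fin n → ZMod 2, x (Sum.inl s) * ∑ t, eps s t * x (Sum.inr t) := by
      simp only [Finset.mul_sum]
      rw [Finset.sum_comm]
      exact Finset.sum_congr rfl fun s _ => Finset.sum_congr rfl fun t _ => by ring
    have rhs1 : ∑ s : Fin n → ZMod 2, x (Sum.inl s) *
          (u * x (Sum.inl s)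
            + ∑ t : Fin n, -(1/2) * ((if s t = 0 then (1:ℝ) else -1) / (↑n * N)) * x (Sum.inr t))
        = u * (∑ s : Fin n → ZMod 2, x (Sum.inl s) * x (Sum.inl s))
          - (1/(2*↑n*N)) * ∑ s : Fin n → ZMod 2,
              x (Sum.inl s) * ∑ t, eps s t * x (Sum.inr t) := by
      rw [Finset.mul_sum, Finset.mul_sum, ← Finset.sum_sub_distrib]
      refine Finset.sum_congr rfl fun s _ => ?_
      rw [crossA s]; ring
    have rhs2 : ∑ t : Fin n, x (Sum.inr t) *
          (-(1/2) * (∑ s : Fin n → ZMod 2,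
              (if s t = 0 then (1:ℝ) else -1) / (↑n * N) * x (Sum.inl s))
            + vv * x (Sum.inr t))
        = vv * (∑ t : Fin n, x (Sum.inr t) * x (Sum.inr t))
          - (1/(2*↑n*N)) * ∑ s : Fin n → ZMod 2,
              x (Sum.inl s) * ∑ t, eps s t * x (Sum.inr t) := by
      rw [← swap, Finset.mul_sum, Finset.mul_sum, ← Finset.sum_sub_distrib]
      refine Finset.sum_congr rfl fun t _ => ?_
      rw [crossB t]; ring
    have lhs1 : ∑ s : Fin n → ZMod 2,
          (a * x (Sum.inl s) - c * ∑ t, eps s t * x (Sum.inr t)) ^ 2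
        = u * (∑ s : Fin n → ZMod 2, x (Sum.inl s) * x (Sum.inl s))
          - (1/(↑n*N)) * (∑ s : Fin n → ZMod 2,
              x (Sum.inl s) * ∑ t, eps s t * x (Sum.inr t))
          + (vv/N) * ∑ s : Fin n → ZMod 2,
              (∑ t, eps s t * x (Sum.inr t)) * (∑ t, eps s t * x (Sum.inr t)) := by
      rw [Finset.mul_sum, Finset.mul_sum, Finset.mul_sum, ← Finset.sum_sub_distrib,
        ← Finset.sum_add_distrib]
      refine Finset.sum_congr rfl fun s _ => ?_
      have h : (a * x (Sum.inl s) - c * ∑ t, eps s t * x (Sum.inr t)) ^ 2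
          = (a*a) * (x (Sum.inl s) * x (Sum.inl s))
            - (a*c) * (2 * (x (Sum.inl s) * ∑ t, eps s t * x (Sum.inr t)))
            + (c*c) * ((∑ t, eps s t * x (Sum.inr t)) * (∑ t, eps s t * x (Sum.inr t))) := by
        ring
      rw [h, ha2, hc2, hac]; ring
    rw [rhs1]
    erw [rhs2]
    rw [lhs1, sum_g_sq (fun t => x (Sum.inr t)), ← hN]
    have hNne : N ≠ 0 := ne_of_gt hNpos
    field_simp
    ring
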